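/- If a function f is statistically ward continuous on a subset E of a 2-normed space X, then f is sequentially continuous on E in the ordinary sense. -/

import Mathlib

open Filter

/-- A 2-normed space: a real linear space with dim > 1 together with a 2-norm. -/
structure TwoNormedSpace (X : Type*) [AddCommGroup X] [Module ℝ X] : Type _ where
  toFun : X → X → ℝ
  one_lt_rank : 1 < Module.rank ℝ X
  eq_zero_iff : ∀ x y : X, toFun x y = 0 ↔ ¬ LinearIndependent ℝ ![x, y]
  symm : ∀ x y : X, toFun x y = toFun y x
  smul_left : ∀ (α : ℝ) (x y : X), toFun (α • x) y = |α| * toFun x y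
  add_right : ∀ x y z : X, toFun x (y + z) ≤ toFun x y + toFun x z

variable {X : Type*} [AddCommGroup X] [Module ℝ X]

/-- A sequence is statistically quasi-Cauchy w.r.t. a 2-norm `N`. -/
def StatQuasiCauchy (N : X → X → ℝ) (x : ℕ → X) : Prop :=
  ∀ ε > (0:ℝ), ∀ z : X, Tendsto
    (fun n => (((Finset.range n).filter (fun k => ε ≤ N (x (k+1) - x k) z)).card : ℝ) / n)
    atTop (nhds 0)

/-- A sequence statistically converges to `L` w.r.t. a 2-norm `N`. -/
def StatConv (N : X → X → ℝ) (x : ℕ → X) (L : X) : Prop :=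
  ∀ ε > (0:ℝ), ∀ z : X, Tendsto
    (fun n => (((Finset.range n).filter (fun k => ε ≤ N (x k - L) z)).card : ℝ) / n)
    atTop (nhds 0)

/-- A sequence converges to `L` w.r.t. a 2-norm `N`. -/
def ConvTo (N : X → X → ℝ) (x : ℕ → X) (L : X) : Prop :=
  ∀ z : X, Tendsto (fun n => N (x n - L) z) atTop (nhds 0)

/-- A sequence is quasi-Cauchy w.r.t. a 2-norm `N`. -/
def QuasiCauchy (N : X → X → ℝ) (x : ℕ → X) : Prop :=
  ∀ z : X, Tendsto (fun n => N (x (n+1) - x n) z) atTop (nhds 0)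

/-- A subset `E` is statistically ward compact w.r.t. a 2-norm `N`. -/
def StatWardCompact (N : X → X → ℝ) (E : Set X) : Prop :=
  ∀ x : ℕ → X, (∀ n, x n ∈ E) → ∃ φ : ℕ → ℕ, StrictMono φ ∧ StatQuasiCauchy N (x ∘ φ)

/-- `f` is statistically ward continuous on `E` w.r.t. a 2-norm `N`. -/
def StatWardContinuousOn (N : X → X → ℝ) (f : X → X) (E : Set X) : Prop :=
  ∀ x : ℕ → X, (∀ n, x n ∈ E) → StatQuasiCauchy N x → StatQuasiCauchy N (fun n => f (x n))

/-- The standard 2-norm on `ℝ²`: the area of the parallelogram spanned by `a` and `b`. -/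
def N2 : ℝ × ℝ → ℝ × ℝ → ℝ := fun a b => |a.1 * b.2 - a.2 * b.1|

lemma twoNorm_neg {X : Type*} [AddCommGroup X] [Module ℝ X] (T : TwoNormedSpace X)
    (a b : X) : T.toFun (-a) b = T.toFun a b := by
  have h := T.smul_left (-1) a b
  simpa using h

lemma twoNorm_nonneg {X : Type*} [AddCommGroup X] [Module ℝ X] (T : TwoNormedSpace X)
    (a b : X) : 0 ≤ T.toFun a b := by
  have h0 : T.toFun 0 a = 0 := by
    have := T.smul_left 0 a a
    simpa using this
  have h1 : T.toFun a 0 = 0 := by rw [T.symm]; exact h0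
  have h2 : T.toFun a (b + -b) ≤ T.toFun a b + T.toFun a (-b) := T.add_right a b (-b)
  have h3 : T.toFun a (-b) = T.toFun a b := by
    rw [T.symm a (-b), twoNorm_neg, T.symm]
  rw [add_neg_cancel, h1, h3] at h2
  linarith

lemma twoNorm_sub_comm {X : Type*} [AddCommGroup X] [Module ℝ X] (T : TwoNormedSpace X)
    (a b c : X) : T.toFun (a - b) c = T.toFun (b - a) c := by
  rw [← twoNorm_neg T (a - b) c, neg_sub]

lemma quasiCauchy_statQuasiCauchy {X : Type*} [AddCommGroup X] [Module ℝ X]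
    (T : TwoNormedSpace X) (x : ℕ → X) (h : QuasiCauchy T.toFun x) :
    StatQuasiCauchy T.toFun x := by
  intro ε hε z
  obtain ⟨K, hK⟩ := (Metric.tendsto_atTop.mp (h z)) ε hε
  have hsub : ∀ n, ((Finset.range n).filter (fun k => ε ≤ T.toFun (x (k+1) - x k) z))
      ⊆ Finset.range K := by
    intro n k hk
    simp only [Finset.mem_filter, Finset.mem_range] at hk ⊢
    by_contra hlt
    push_neg at hlt
    have h2 := hK k hlt
    rw [Real.dist_eq, sub_zero] at h2
    have := (abs_lt.mp h2).2
    linarith [hk.2]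
  apply squeeze_zero (g := fun n : ℕ => (K : ℝ) / n)
  · intro n
    positivity
  · intro n
    gcongr
    exact_mod_cast (Finset.card_le_card (hsub n)).trans_eq (Finset.card_range K)
  · exact tendsto_const_div_atTop_nhds_zero_nat (K : ℝ)

theorem stmt17 {X : Type*} [AddCommGroup X] [Module ℝ X] (T : TwoNormedSpace X)
    (E : Set X) (f : X → X) (hf : StatWardContinuousOn T.toFun f E) :
    ∀ x₀ ∈ E, ∀ x : ℕ → X, (∀ n, x n ∈ E) → ConvTo T.toFun x x₀ →
      ConvTo T.toFun (fun n => f (x n)) (f x₀) := by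
  intro x₀ hx₀ x hxE hconv z
  by_contra hnot
  -- extract ε and a subsequence staying ε-away
  rw [Metric.tendsto_atTop] at hnot
  push_neg at hnot
  obtain ⟨ε, hε, hfreq⟩ := hnot
  have hfreq' : ∃ᶠ n in atTop, ε ≤ T.toFun (f (x n) - f x₀) z := by
    rw [Filter.frequently_atTop]
    intro a
    obtain ⟨n, hn, hd⟩ := hfreq a
    refine ⟨n, hn, ?_⟩
    rw [Real.dist_eq, sub_zero, abs_of_nonneg (twoNorm_nonneg T _ _)] at hd
    exact hd
  obtain ⟨φ, hφmono, hφ⟩ := extraction_of_frequently_atTop hfreq'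
  -- interleaved sequence
  set y : ℕ → X := fun n => if n % 2 = 0 then x (φ (n / 2)) else x₀ with hy
  have hyE : ∀ n, y n ∈ E := by
    intro n
    by_cases h : n % 2 = 0 <;> simp [hy, h, hxE, hx₀]
  have hyQC : QuasiCauchy T.toFun y := by
    intro w
    rw [Metric.tendsto_atTop]
    intro δ hδ
    obtain ⟨M, hM⟩ := (Metric.tendsto_atTop.mp ((hconv w).comp (hφmono.tendsto_atTop))) δ hδ
    refine ⟨2 * M + 2, fun n hn => ?_⟩
    rw [Real.dist_eq, sub_zero, abs_of_nonneg (twoNorm_nonneg T _ _)]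
    rcases Nat.even_or_odd n with ⟨m, hm⟩ | ⟨m, hm⟩
    · -- n = 2m : y n = x (φ m), y (n+1) = x₀
      have hyn : y n = x (φ m) := by
        have h2 : n % 2 = 0 := by omega
        have h3 : n / 2 = m := by omega
        simp [hy, h2, h3]
      have hyn1 : y (n + 1) = x₀ := by
        have : (n + 1) % 2 = 1 := by omega
        simp [hy, this]
      rw [hyn1, hyn, twoNorm_sub_comm]
      have hmM : m ≥ M := by omega
      have := hM m hmM
      rwa [Function.comp_apply, Real.dist_eq, sub_zero,
        abs_of_nonneg (twoNorm_nonneg T _ _)] at this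
    · -- n = 2m+1 : y n = x₀, y (n+1) = x (φ (m+1))
      have hyn : y n = x₀ := by
        have : n % 2 = 1 := by omega
        simp [hy, this]
      have hyn1 : y (n + 1) = x (φ (m + 1)) := by
        have h2 : (n + 1) % 2 = 0 := by omega
        have h3 : (n + 1) / 2 = m + 1 := by omega
        simp [hy, h2, h3]
      rw [hyn1, hyn]
      have hmM : m + 1 ≥ M := by omega
      have := hM (m + 1) hmM
      rwa [Function.comp_apply, Real.dist_eq, sub_zero,
        abs_of_nonneg (twoNorm_nonneg T _ _)] at this
  have hstat := hf y hyE (quasiCauchy_statQuasiCauchy T y hyQC) ε hε z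
  -- along n = 2m+2 the density is at least 1/2
  have hkey : ∀ m : ℕ, (1 : ℝ) / 2 ≤
      (((Finset.range (2 * m + 2)).filter
        (fun k => ε ≤ T.toFun ((fun n => f (y n)) (k+1) - (fun n => f (y n)) k) z)).card : ℝ)
        / (2 * m + 2 : ℕ) := by
    intro m
    have himg : (Finset.range (m + 1)).image (fun j => 2 * j) ⊆
        (Finset.range (2 * m + 2)).filter
        (fun k => ε ≤ T.toFun ((fun n => f (y n)) (k+1) - (fun n => f (y n)) k) z) := by
      intro k hk
      simp only [Finset.mem_image, Finset.mem_range] at hk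
      obtain ⟨j, hj, rfl⟩ := hk
      simp only [Finset.mem_filter, Finset.mem_range]
      constructor
      · omega
      · have hyk : y (2 * j) = x (φ j) := by
          have h2 : (2 * j) % 2 = 0 := by omega
          have h3 : (2 * j) / 2 = j := by omega
          simp [hy, h2, h3]
        have hyk1 : y (2 * j + 1) = x₀ := by
          have : (2 * j + 1) % 2 = 1 := by omega
          simp [hy, this]
        simp only [hyk, hyk1]
        rw [twoNorm_sub_comm]
        exact hφ j
    have hcard : (m + 1 : ℝ) ≤
        (((Finset.range (2 * m + 2)).filter
        (fun k => ε ≤ T.toFun ((fun n => f (y n)) (k+1) - (fun n => f (y n)) k) z)).card : ℝ) := by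
      have h1 : ((Finset.range (m + 1)).image (fun j => 2 * j)).card = m + 1 := by
        rw [Finset.card_image_of_injective _ (fun a b hab => by omega), Finset.card_range]
      have := Finset.card_le_card himg
      rw [h1] at this
      exact_mod_cast this
    rw [le_div_iff₀ (by positivity)]
    push_cast
    linarith [hcard]
  have hlim : Tendsto (fun m : ℕ =>
      (((Finset.range (2 * m + 2)).filter
        (fun k => ε ≤ T.toFun ((fun n => f (y n)) (k+1) - (fun n => f (y n)) k) z)).card : ℝ)
        / (2 * m + 2 : ℕ)) atTop (nhds 0) :=
    hstat.comp (tendsto_atTop_atTop.mpr (fun b => ⟨b, fun a ha => by omega⟩))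
  have h12 : (1 : ℝ) / 2 ≤ 0 := ge_of_tendsto' hlim hkey
  linarith
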